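/- arXiv:2506.01354 — 2 statements merged into one kernel-verified Lean document; each statement's English description precedes it below -/
import Mathlib

section
/- (Menelaus' theorem for translation triangles in Nil.) Let A₀, A₁, A₂ ∈ ℝ³ be points of Nil whose fibre projections π(A₀), π(A₁), π(A₂) are affinely independent in ℝ². For (i,j) ∈ {(0,1),(1,2),(2,0)} let γ_{ij} be the Nil translation curve with γ_{ij}(0) = A_i and γ_{ij}(1) = A_j. Let P = γ₀₁(p), Q = γ₁₂(q), R = γ₂₀(r) with p, q, r ∉ {0, 1}. If π(P), π(Q), π(R) lie on a common Euclidean line in ℝ² which does not pass through any of π(A₀), π(A₁), π(A₂), then the Nil simple ratios satisfy (p/(1−p)) · (q/(1−q)) · (r/(1−r)) = −1. -/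
noncomputable def lf (a b x : ℝ × ℝ) : ℝ :=
  (b.1 - a.1) * (x.2 - a.2) - (b.2 - a.2) * (x.1 - a.1)

theorem mem_pair_iff (a b x : ℝ × ℝ) :
    x ∈ affineSpan ℝ {a, b} ↔ ∃ t : ℝ, x - a = t • (b - a) := by
  constructor
  · intro h
    have hx : (x - a) +ᵥ a ∈ affineSpan ℝ {a, b} := by
      simpa [vadd_eq_add, sub_add_cancel] using h
    obtain ⟨t, ht⟩ := vadd_left_mem_affineSpan_pair.mp hx
    exact ⟨t, by simpa [vsub_eq_sub] using ht.symm⟩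
  · rintro ⟨t, ht⟩
    have : x = (x - a) +ᵥ a := by simp [vadd_eq_add]
    rw [this]
    exact vadd_left_mem_affineSpan_pair.mpr ⟨t, by simpa [vsub_eq_sub] using ht.symm⟩

theorem lf_zero_of_mem (a b x : ℝ × ℝ) (h : x ∈ affineSpan ℝ {a, b}) :
    lf a b x = 0 := by
  obtain ⟨t, ht⟩ := (mem_pair_iff a b x).mp h
  have h1 : x.1 - a.1 = t * (b.1 - a.1) := by
    have := congrArg Prod.fst ht; simpa using this
  have h2 : x.2 - a.2 = t * (b.2 - a.2) := by
    have := congrArg Prod.snd ht; simpa using this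
  unfold lf; rw [h1, h2]; ring

theorem mem_of_lf_zero (a b x : ℝ × ℝ) (hab : a ≠ b) (h : lf a b x = 0) :
    x ∈ affineSpan ℝ {a, b} := by
  rw [mem_pair_iff]
  unfold lf at h
  have hne : b.1 - a.1 ≠ 0 ∨ b.2 - a.2 ≠ 0 := by
    by_contra hc
    push_neg at hc
    exact hab (Prod.ext (by linarith [hc.1]) (by linarith [hc.2])).symm
  rcases hne with h1 | h1
  · exact ⟨(x.1 - a.1) / (b.1 - a.1), by
      ext
      · simp; field_simp
      · simp; field_simp; nlinarith [h]⟩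
  · exact ⟨(x.2 - a.2) / (b.2 - a.2), by
      ext
      · simp; field_simp; nlinarith [h]
      · simp; field_simp⟩



/-- The Nil translation curve starting at `P = (p,q,r)` with direction `(u,v,w)`. -/
noncomputable def nilCurve (P d : ℝ × ℝ × ℝ) : ℝ → ℝ × ℝ × ℝ :=
  fun t =>
    (P.1 + d.1 * t,
     P.2.1 + d.2.1 * t,
     P.2.2 + P.1 * d.2.1 * t + d.1 * d.2.1 * t ^ 2 / 2 + d.2.2 * t)

/-- The unique Nil translation curve `γ` with `γ(0) = A` and `γ(1) = B`. -/
noncomputable def nilCurveThrough (A B : ℝ × ℝ × ℝ) : ℝ → ℝ × ℝ × ℝ :=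
  nilCurve A
    (B.1 - A.1, B.2.1 - A.2.1,
     B.2.2 - A.2.2 - A.1 * (B.2.1 - A.2.1) - (B.1 - A.1) * (B.2.1 - A.2.1) / 2)

/-- The fibre projection `π(a,b,c) = (a,b)`. -/
def fibreProj : ℝ × ℝ × ℝ → ℝ × ℝ := fun q => (q.1, q.2.1)

/-- **Menelaus' theorem for translation triangles in Nil.**
If the fibre projections of the points `P`, `Q`, `R` on the sides of a Nil
translation triangle lie on a common Euclidean line avoiding the projections of
the vertices, then the product of the three Nil simple ratios `p/(1−p)`,
`q/(1−q)`, `r/(1−r)` equals `−1`. -/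
theorem nil_menelaus
    (A₀ A₁ A₂ : ℝ × ℝ × ℝ)
    (hind : AffineIndependent ℝ ![fibreProj A₀, fibreProj A₁, fibreProj A₂])
    (p q r : ℝ) (hp0 : p ≠ 0) (hp1 : p ≠ 1) (hq0 : q ≠ 0) (hq1 : q ≠ 1)
    (hr0 : r ≠ 0) (hr1 : r ≠ 1)
    (P Q R : ℝ × ℝ × ℝ)
    (hP : P = nilCurveThrough A₀ A₁ p)
    (hQ : Q = nilCurveThrough A₁ A₂ q)
    (hR : R = nilCurveThrough A₂ A₀ r)
    (a b : ℝ × ℝ) (hab : a ≠ b)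
    (hPl : fibreProj P ∈ affineSpan ℝ {a, b})
    (hQl : fibreProj Q ∈ affineSpan ℝ {a, b})
    (hRl : fibreProj R ∈ affineSpan ℝ {a, b})
    (hA0 : fibreProj A₀ ∉ affineSpan ℝ {a, b})
    (hA1 : fibreProj A₁ ∉ affineSpan ℝ {a, b})
    (hA2 : fibreProj A₂ ∉ affineSpan ℝ {a, b}) :
    (p / (1 - p)) * (q / (1 - q)) * (r / (1 - r)) = -1 := by
  have f0 : lf a b (fibreProj A₀) ≠ 0 := fun h => hA0 (mem_of_lf_zero a b _ hab h)
  have f1 : lf a b (fibreProj A₁) ≠ 0 := fun h => hA1 (mem_of_lf_zero a b _ hab h)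
  have f2 : lf a b (fibreProj A₂) ≠ 0 := fun h => hA2 (mem_of_lf_zero a b _ hab h)
  have hfP := lf_zero_of_mem a b _ hPl
  have hfQ := lf_zero_of_mem a b _ hQl
  have hfR := lf_zero_of_mem a b _ hRl
  set g0 := lf a b (fibreProj A₀) with hg0
  set g1 := lf a b (fibreProj A₁) with hg1
  set g2 := lf a b (fibreProj A₂) with hg2
  have eP : (1 - p) * g0 + p * g1 = 0 := by
    rw [hg0, hg1]; rw [hP] at hfP
    simp only [lf, fibreProj, nilCurveThrough, nilCurve] at hfP ⊢
    linarith [hfP]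
  have eQ : (1 - q) * g1 + q * g2 = 0 := by
    rw [hg1, hg2]; rw [hQ] at hfQ
    simp only [lf, fibreProj, nilCurveThrough, nilCurve] at hfQ ⊢
    linarith [hfQ]
  have eR : (1 - r) * g2 + r * g0 = 0 := by
    rw [hg2, hg0]; rw [hR] at hfR
    simp only [lf, fibreProj, nilCurveThrough, nilCurve] at hfR ⊢
    linarith [hfR]
  have key : p * q * r = -((1 - p) * (1 - q) * (1 - r)) := by
    have h : (p * g1) * (q * g2) * (r * g0) =
        (-((1 - p) * g0)) * (-((1 - q) * g1)) * (-((1 - r) * g2)) := by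
      rw [show p * g1 = -((1 - p) * g0) by linarith,
          show q * g2 = -((1 - q) * g1) by linarith,
          show r * g0 = -((1 - r) * g2) by linarith]
    have hg : g0 * g1 * g2 ≠ 0 := by
      exact mul_ne_zero (mul_ne_zero f0 f1) f2
    have := mul_right_cancel₀ hg (show (p * q * r) * (g0 * g1 * g2) =
        (-((1 - p) * (1 - q) * (1 - r))) * (g0 * g1 * g2) by nlinarith [h])
    exact this
  have hp1' : (1 : ℝ) - p ≠ 0 := by intro h; apply hp1; linarith
  have hq1' : (1 : ℝ) - q ≠ 0 := by intro h; apply hq1; linarith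
  have hr1' : (1 : ℝ) - r ≠ 0 := by intro h; apply hr1; linarith
  field_simp
  linarith [key]
end

section
/- (Spherical Ceva's theorem, unsigned form.) Let A, B, C be linearly independent unit vectors in EuclideanSpace ℝ (Fin 3), and let T be a unit vector with T ∉ span ℝ {A, B} ∪ span ℝ {B, C} ∪ span ℝ {C, A}. Let P, Q, R be unit vectors with Q ∈ span ℝ {B, C} ∩ span ℝ {A, T}, R ∈ span ℝ {C, A} ∩ span ℝ {B, T}, P ∈ span ℝ {A, B} ∩ span ℝ {C, T}, such that P ∉ {A, −A, B, −B}, Q ∉ {B, −B, C, −C}, R ∉ {C, −C, A, −A}. Then sin ∠(A,P) · sin ∠(B,Q) · sin ∠(C,R) = sin ∠(P,B) · sin ∠(Q,C) · sin ∠(R,A), where ∠(X,Y) denotes the angle between the vectors X and Y (the spherical distance between the corresponding points of the unit sphere). -/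
open InnerProductGeometry
open RealInnerProductSpace

lemma sin_angle_aux (X Y : EuclideanSpace ℝ (Fin 3)) (a b : ℝ)
    (hX : ‖X‖ = 1) (hY : ‖Y‖ = 1) (hN : ‖a•X + b•Y‖ = 1) :
    Real.sin (angle X (a•X + b•Y)) = |b| * Real.sqrt (1 - ⟪X, Y⟫^2) := by
  set c : ℝ := ⟪X, Y⟫ with hc
  have h1 : ⟪X, a•X + b•Y⟫ = a + b*c := by
    rw [inner_add_right, real_inner_smul_right, real_inner_smul_right,
      real_inner_self_eq_norm_sq, hX, ← hc]; ring
  have hexp : a^2 + 2*(a*(b*c)) + b^2 = 1 := by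
    have h := norm_add_sq_real (a•X) (b•Y)
    rw [hN] at h
    have hy : ‖b • Y‖^2 = b^2 := by rw [norm_smul]; simp [mul_pow, sq_abs, hY]
    have hx : ‖a • X‖^2 = a^2 := by rw [norm_smul]; simp [mul_pow, sq_abs, hX]
    rw [real_inner_smul_left, real_inner_smul_right, hx, hy] at h
    linarith [h]
  have hsq : 1 - (a + b*c)^2 = b^2 * (1 - c^2) := by nlinarith [hexp]
  rw [angle, hX, hN, h1]
  simp only [one_mul, div_one]
  rw [Real.sin_arccos, hsq, Real.sqrt_mul (sq_nonneg b), Real.sqrt_sq_eq_abs]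

/-- **Spherical Ceva's theorem (unsigned form).**
If the great-circle cevians from the vertices `A`, `B`, `C` of a spherical triangle
through a common unit vector `T` (not lying on any side) meet the opposite sides in
the unit vectors `Q`, `R`, `P`, then the product of the sines of the spherical
distances `∠(A,P)`, `∠(B,Q)`, `∠(C,R)` equals the product of the sines of
`∠(P,B)`, `∠(Q,C)`, `∠(R,A)`. -/
theorem spherical_ceva
    (A B C T P Q R : EuclideanSpace ℝ (Fin 3))
    (hA : ‖A‖ = 1) (hB : ‖B‖ = 1) (hC : ‖C‖ = 1) (hT : ‖T‖ = 1)
    (hP : ‖P‖ = 1) (hQ : ‖Q‖ = 1) (hR : ‖R‖ = 1)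
    (hABC : LinearIndependent ℝ ![A, B, C])
    (hTAB : T ∉ Submodule.span ℝ {A, B})
    (hTBC : T ∉ Submodule.span ℝ {B, C})
    (hTCA : T ∉ Submodule.span ℝ {C, A})
    (hQmem : Q ∈ Submodule.span ℝ {B, C} ⊓ Submodule.span ℝ {A, T})
    (hRmem : R ∈ Submodule.span ℝ {C, A} ⊓ Submodule.span ℝ {B, T})
    (hPmem : P ∈ Submodule.span ℝ {A, B} ⊓ Submodule.span ℝ {C, T})
    (hP1 : P ≠ A) (hP2 : P ≠ -A) (hP3 : P ≠ B) (hP4 : P ≠ -B)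
    (hQ1 : Q ≠ B) (hQ2 : Q ≠ -B) (hQ3 : Q ≠ C) (hQ4 : Q ≠ -C)
    (hR1 : R ≠ C) (hR2 : R ≠ -C) (hR3 : R ≠ A) (hR4 : R ≠ -A) :
    Real.sin (angle A P) * Real.sin (angle B Q) * Real.sin (angle C R) =
      Real.sin (angle P B) * Real.sin (angle Q C) * Real.sin (angle R A) := by
  -- coefficient extraction from linear independence
  have key : ∀ x y z : ℝ, x•A + y•B + z•C = 0 → x = 0 ∧ y = 0 ∧ z = 0 := by
    intro x y z h
    have h2 := Fintype.linearIndependent_iff.mp hABC ![x, y, z]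
      (by simpa [Fin.sum_univ_three] using h)
    exact ⟨h2 0, h2 1, h2 2⟩
  -- T as a combination of A, B, C
  have hspan : Submodule.span ℝ (Set.range ![A, B, C]) = ⊤ :=
    hABC.span_eq_top_of_card_eq_finrank (by simp [finrank_euclideanSpace])
  obtain ⟨f, hf⟩ := Submodule.mem_span_range_iff_exists_fun ℝ |>.mp
    (hspan ▸ Submodule.mem_top : T ∈ Submodule.span ℝ (Set.range ![A, B, C]))
  set α := f 0; set β := f 1; set γ := f 2
  have hTrep : α•A + β•B + γ•C = T := by simpa [Fin.sum_univ_three] using hf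
  -- coefficients of Q, R, P
  obtain ⟨q1, q2, hQrep⟩ := Submodule.mem_span_pair.mp hQmem.1
  obtain ⟨s, t, hQt⟩ := Submodule.mem_span_pair.mp hQmem.2
  obtain ⟨r1, r2, hRrep⟩ := Submodule.mem_span_pair.mp hRmem.1
  obtain ⟨s', u, hRt⟩ := Submodule.mem_span_pair.mp hRmem.2
  obtain ⟨p1, p2, hPrep⟩ := Submodule.mem_span_pair.mp hPmem.1
  obtain ⟨s'', v, hPt⟩ := Submodule.mem_span_pair.mp hPmem.2
  -- match coefficients
  have hQc : q1 = t*β ∧ q2 = t*γ := by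
    have h0 : (s + t*α)•A + (t*β - q1)•B + (t*γ - q2)•C = 0 := by
      have h := hQt.trans hQrep.symm
      rw [← hTrep] at h
      linear_combination (norm := module) h
    obtain ⟨-, h1, h2⟩ := key _ _ _ h0
    constructor <;> linarith
  have hRc : r1 = u*γ ∧ r2 = u*α := by
    have h0 : (u*α - r2)•A + (s' + u*β)•B + (u*γ - r1)•C = 0 := by
      have h := hRt.trans hRrep.symm
      rw [← hTrep] at h
      linear_combination (norm := module) h
    obtain ⟨h1, -, h2⟩ := key _ _ _ h0
    constructor <;> linarith
  have hPc : p1 = v*α ∧ p2 = v*β := by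
    have h0 : (v*α - p1)•A + (v*β - p2)•B + (s'' + v*γ)•C = 0 := by
      have h := hPt.trans hPrep.symm
      rw [← hTrep] at h
      linear_combination (norm := module) h
    obtain ⟨h1, h2, -⟩ := key _ _ _ h0
    constructor <;> linarith
  -- the six sines
  have sAP : Real.sin (angle A P) = |p2| * Real.sqrt (1 - ⟪A, B⟫^2) := by
    rw [← hPrep]; exact sin_angle_aux A B p1 p2 hA hB (hPrep ▸ hP)
  have sPB : Real.sin (angle P B) = |p1| * Real.sqrt (1 - ⟪A, B⟫^2) := by
    have h : p2•B + p1•A = P := by rw [← hPrep]; module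
    rw [angle_comm, ← h, sin_angle_aux B A p2 p1 hB hA (h ▸ hP), real_inner_comm]
  have sBQ : Real.sin (angle B Q) = |q2| * Real.sqrt (1 - ⟪B, C⟫^2) := by
    rw [← hQrep]; exact sin_angle_aux B C q1 q2 hB hC (hQrep ▸ hQ)
  have sQC : Real.sin (angle Q C) = |q1| * Real.sqrt (1 - ⟪B, C⟫^2) := by
    have h : q2•C + q1•B = Q := by rw [← hQrep]; module
    rw [angle_comm, ← h, sin_angle_aux C B q2 q1 hC hB (h ▸ hQ), real_inner_comm]
  have sCR : Real.sin (angle C R) = |r2| * Real.sqrt (1 - ⟪C, A⟫^2) := by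
    rw [← hRrep]; exact sin_angle_aux C A r1 r2 hC hA (hRrep ▸ hR)
  have sRA : Real.sin (angle R A) = |r1| * Real.sqrt (1 - ⟪C, A⟫^2) := by
    have h : r2•A + r1•C = R := by rw [← hRrep]; module
    rw [angle_comm, ← h, sin_angle_aux A C r2 r1 hA hC (h ▸ hR), real_inner_comm]
  rw [sAP, sPB, sBQ, sQC, sCR, sRA]
  have habs : |p2| * |q2| * |r2| = |p1| * |q1| * |r1| := by
    rw [← abs_mul, ← abs_mul, ← abs_mul, ← abs_mul]
    congr 1
    rw [hPc.1, hPc.2, hQc.1, hQc.2, hRc.1, hRc.2]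
    ring
  linear_combination (Real.sqrt (1 - ⟪A, B⟫^2) * Real.sqrt (1 - ⟪B, C⟫^2) *
    Real.sqrt (1 - ⟪C, A⟫^2)) * habs
end
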